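/- Let A be an n×n positive semidefinite matrix and λ > 0. If j ≥ 2·d_eff^λ(A) (where d_eff^λ(A) = Tr(A(A+λI)^{-1})), then the j-th largest eigenvalue of A satisfies λ_j(A) ≤ λ. -/
import Mathlib


open Matrix

theorem stmt2 {n : ℕ} (A : Matrix (Fin n) (Fin n) ℝ) (hA : A.PosSemidef)
    (e : Fin n → ℝ) (σ : Equiv.Perm (Fin n)) (he : e = hA.1.eigenvalues ∘ σ)
    (hmono : Antitone e)
    (lam : ℝ) (hlam : 0 < lam)
    (j : Fin n) (hj : 2 * ∑ i, e i / (e i + lam) ≤ (j : ℕ) + 1) :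
    e j ≤ lam := by
  by_contra h
  push_neg at h
  have hnn : ∀ i, 0 ≤ e i := by
    intro i
    rw [he]
    exact hA.eigenvalues_nonneg _
  have hterm_nn : ∀ i, 0 ≤ e i / (e i + lam) := fun i =>
    div_nonneg (hnn i) (by linarith [hnn i])
  have hbig : ∀ i ∈ Finset.Iic j, (1:ℝ)/2 < e i / (e i + lam) := by
    intro i hi
    have hij : i ≤ j := Finset.mem_Iic.mp hi
    have hei : lam < e i := lt_of_lt_of_le h (hmono hij)
    rw [div_lt_div_iff₀ (by norm_num) (by linarith)]
    linarith
  have h1 : ∑ i ∈ Finset.Iic j, (1:ℝ)/2 < ∑ i ∈ Finset.Iic j, e i / (e i + lam) :=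
    Finset.sum_lt_sum_of_nonempty ⟨j, Finset.mem_Iic.mpr le_rfl⟩ hbig
  have h2 : ∑ i ∈ Finset.Iic j, e i / (e i + lam) ≤ ∑ i, e i / (e i + lam) :=
    Finset.sum_le_sum_of_subset_of_nonneg (Finset.subset_univ _)
      (fun i _ _ => hterm_nn i)
  have hcard : (Finset.Iic j).card = (j : ℕ) + 1 := by
    exact Fin.card_Iic j
  rw [Finset.sum_const, hcard, nsmul_eq_mul] at h1
  have : ((j : ℕ) + 1 : ℝ) / 2 < ∑ i, e i / (e i + lam) := by
    push_cast at h1 ⊢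
    linarith
  linarith
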